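/- Let Z₁, Z₂, Y be real reflexive separable Banach spaces. Assume (HA): A : Q × Z₂ → Z₂* with A(·,y) continuous for each y and, for each t, A(t,·) bounded, demicontinuous, and strongly monotone with constant m_A > 0; (Hg): g : Q × Z₁ → Z₂* with g(·,z) continuous and ‖g(t,z₁) − g(t,z₂)‖_{Z₂*} ≤ m_g‖z₁ − z₂‖_{Z₁}; N : Z₂ → Y linear, continuous, compact, surjective; J : Q × Y → ℝ with J(t,·) locally Lipschitz and ⟨θ₁ − θ₂, w₁ − w₂⟩ ≥ −c_J‖w₁ − w₂‖_Y² for all θᵢ ∈ ∂J(t,wᵢ), where m_A > c_J‖N‖²; J_δ : Q × Y → ℝ with J_δ(t,·) locally Lipschitz; and suppose V(δ) ≥ 0 is such that for every (t,w) ∈ Q × Z₂ one has ‖ζ − ζ_δ‖_{Z₂*} ≤ V(δ) whenever ζ ∈ N*∂J(t,Nw) and ζ_δ ∈ N*∂J_δ(t,Nw). Let z, z_δ ∈ IC(Q;Z₁), and let y, y_δ ∈ IC(Q;Z₂) satisfy, for all t ∈ Q, g(t,z(t)) − A(t,y(t)) ∈ N*∂J(t, N y(t)) and g(t,z_δ(t))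 − A(t,y_δ(t)) ∈ N*∂J_δ(t, N y_δ(t)). Then for every t ∈ Q: ‖y(t) − y_δ(t)‖_{Z₂} ≤ V(δ)/(m_A − c_J‖N‖²) + (m_g/(m_A − c_J‖N‖²)) ‖z(t) − z_δ(t)‖_{Z₁}. -/

import Mathlib

open Filter Topology NormedSpace

/-- `IC T m τ x` : the space `IC(Q;X)` of piecewise continuous functions on `Q = [0,T]` with
possible jumps at the impulse times `τ 1, …, τ m`. -/
def IC {X : Type*} [NormedAddCommGroup X] (T : ℝ) (m : ℕ) (τ : ℕ → ℝ) (x : ℝ → X) : Prop :=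
  (∀ t ∈ Set.Icc (0:ℝ) T, (∀ j, 1 ≤ j → j ≤ m → t ≠ τ j) →
      ContinuousWithinAt x (Set.Icc 0 T) t) ∧
  (∀ j, 1 ≤ j → j ≤ m →
      (Filter.Tendsto x (nhdsWithin (τ j) (Set.Iio (τ j))) (nhds (x (τ j))) ∧
       ∃ L, Filter.Tendsto x (nhdsWithin (τ j) (Set.Ioi (τ j))) (nhds L)))

/-- The Clarke generalized directional derivative. -/
noncomputable def clarkeDeriv {Y : Type*} [NormedAddCommGroup Y] [NormedSpace ℝ Y]
    (F : Y → ℝ) (x v : Y) : ℝ :=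
  Filter.limsup (fun p : Y × ℝ => (F (p.1 + p.2 • v) - F p.1) / p.2)
    ((nhds x) ×ˢ (nhdsWithin (0:ℝ) (Set.Ioi 0)))

/-- The Clarke generalized gradient. -/
def clarkeGrad {Y : Type*} [NormedAddCommGroup Y] [NormedSpace ℝ Y]
    (F : Y → ℝ) (x : Y) : Set (StrongDual ℝ Y) :=
  {η | ∀ v : Y, η v ≤ clarkeDeriv F x v}

set_option linter.unusedSectionVars false
set_option linter.unusedVariables false

section aux
variable {E : Type*} [NormedAddCommGroup E] [NormedSpace ℝ E]

/-- the difference quotient -/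
noncomputable def cq (F : E → ℝ) (v : E) (p : E × ℝ) : ℝ := (F (p.1 + p.2 • v) - F p.1) / p.2

noncomputable def cL (x : E) : Filter (E × ℝ) := (nhds x) ×ˢ (nhdsWithin (0:ℝ) (Set.Ioi 0))

lemma clarkeDeriv_eq (F : E → ℝ) (x v : E) : clarkeDeriv F x v = limsup (cq F v) (cL x) := rfl

instance (x : E) : (cL x).NeBot := by
  unfold cL
  infer_instance

lemma cq_ev_bound (F : E → ℝ) (x : E) {K : NNReal} {s : Set E} (hs : s ∈ 𝓝 x)
    (hL : LipschitzOnWith K F s) (v : E) :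
    ∀ᶠ p in cL x, |cq F v p| ≤ (K : ℝ) * ‖v‖ := by
  obtain ⟨ε, hε, hball⟩ := Metric.mem_nhds_iff.mp hs
  have hv1 : (0:ℝ) < ‖v‖ + 1 := by positivity
  set δ := ε / (2 * (‖v‖ + 1)) with hδdef
  have hδpos : 0 < δ := by positivity
  have h1 : ∀ᶠ p in cL x, p.1 ∈ Metric.ball x (ε/2) :=
    Filter.Eventually.prod_inl (Filter.eventually_mem_set.2 (Metric.ball_mem_nhds x (by linarith))) _
  have h2 : ∀ᶠ p in cL x, p.2 ∈ Set.Ioo 0 δ :=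
    Filter.Eventually.prod_inr (Filter.eventually_mem_set.2 (Ioo_mem_nhdsGT_of_mem ⟨le_refl _, hδpos⟩)) _
  filter_upwards [h1, h2] with p hp1 hp2
  obtain ⟨hμ0, hμδ⟩ := hp2
  have hδmul : δ * (‖v‖ + 1) = ε / 2 := by
    rw [hδdef]; field_simp
  have hin1 : p.1 ∈ s := hball (Metric.ball_subset_ball (by linarith) hp1)
  have hnorm : ‖p.2 • v‖ = p.2 * ‖v‖ := by
    rw [norm_smul, Real.norm_eq_abs, abs_of_pos hμ0]
  have hin2 : p.1 + p.2 • v ∈ s := by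
    apply hball
    rw [Metric.mem_ball, dist_eq_norm]
    have : ‖p.1 + p.2 • v - x‖ ≤ ‖p.1 - x‖ + ‖p.2 • v‖ := by
      have := norm_add_le (p.1 - x) (p.2 • v); simpa [add_sub_right_comm] using this
    have hb : ‖p.1 - x‖ < ε / 2 := by
      rw [← dist_eq_norm]; exact hp1
    have hsm : ‖p.2 • v‖ < ε / 2 := by
      rw [hnorm, ← hδmul]
      calc p.2 * ‖v‖ ≤ p.2 * (‖v‖ + 1) := by nlinarith
        _ < δ * (‖v‖ + 1) := by nlinarith
    linarith
  have hdist := hL.dist_le_mul _ hin2 _ hin1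
  rw [Real.dist_eq, dist_eq_norm, add_sub_cancel_left, hnorm] at hdist
  rw [cq, abs_div, abs_of_pos hμ0, div_le_iff₀ hμ0]
  calc |F (p.1 + p.2 • v) - F p.1| ≤ K * (p.2 * ‖v‖) := hdist
    _ = (K : ℝ) * ‖v‖ * p.2 := by ring

lemma limsup_map_eq {α β : Type*} (u : β → ℝ) (φ : α → β) (l : Filter α) :
    limsup u (Filter.map φ l) = limsup (u ∘ φ) l := by
  unfold Filter.limsup
  rw [Filter.map_map]

end aux

section aux2
variable {E : Type*} [NormedAddCommGroup E] [NormedSpace ℝ E]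

lemma exists_clarke_bounds (F : E → ℝ) (hF : LocallyLipschitz F) (x : E) :
    ∃ K : ℝ, 0 ≤ K ∧ ∀ v : E, ∀ᶠ p in cL x, |cq F v p| ≤ K * ‖v‖ := by
  obtain ⟨K, s, hs, hL⟩ := hF x
  exact ⟨K, K.coe_nonneg, fun v => cq_ev_bound F x hs hL v⟩

lemma bdd_le_of_ev {l : Filter (E × ℝ)} {u : E × ℝ → ℝ} {a : ℝ}
    (hev : ∀ᶠ p in l, |u p| ≤ a) : l.IsBoundedUnder (· ≤ ·) u :=
  Filter.isBoundedUnder_of_eventually_le (hev.mono fun p h => (abs_le.1 h).2)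

lemma bdd_ge_of_ev {l : Filter (E × ℝ)} {u : E × ℝ → ℝ} {a : ℝ}
    (hev : ∀ᶠ p in l, |u p| ≤ a) : l.IsBoundedUnder (· ≥ ·) u :=
  ⟨-a, Filter.eventually_map.2 (hev.mono fun p h => (abs_le.1 h).1)⟩

lemma cobdd_le_of_ev {l : Filter (E × ℝ)} [l.NeBot] {u : E × ℝ → ℝ} {a : ℝ}
    (hev : ∀ᶠ p in l, |u p| ≤ a) : l.IsCoboundedUnder (· ≤ ·) u :=
  Filter.isCoboundedUnder_le_of_eventually_le l (hev.mono fun p h => (abs_le.1 h).1)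

lemma clarkeDeriv_le_of_ev {F : E → ℝ} {x v : E} {a : ℝ}
    (hev : ∀ᶠ p in cL x, |cq F v p| ≤ a) : clarkeDeriv F x v ≤ a := by
  rw [clarkeDeriv_eq]
  exact Filter.limsup_le_of_le (cobdd_le_of_ev hev) (hev.mono fun p h => (abs_le.1 h).2)

lemma clarkeDeriv_zero (F : E → ℝ) (x : E) : clarkeDeriv F x 0 = 0 := by
  rw [clarkeDeriv_eq]
  have h : cq F (0 : E) = fun _ : E × ℝ => (0:ℝ) := by
    funext p; simp [cq]
  rw [h]
  exact Filter.limsup_const 0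

lemma clarkeDeriv_add_le (F : E → ℝ) (hF : LocallyLipschitz F) (x v w : E) :
    clarkeDeriv F x (v + w) ≤ clarkeDeriv F x v + clarkeDeriv F x w := by
  obtain ⟨K, hK0, hev⟩ := exists_clarke_bounds F hF x
  set φ : E × ℝ → E × ℝ := fun p => (p.1 + p.2 • v, p.2) with hφdef
  have hφ : Filter.Tendsto φ (cL x) (cL x) := by
    unfold cL
    refine Filter.Tendsto.prodMk ?_ Filter.tendsto_snd
    have hc : Continuous (fun p : E × ℝ => p.1 + p.2 • v) :=
      continuous_fst.add (continuous_snd.smul continuous_const)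
    have h1 : Filter.Tendsto (fun p : E × ℝ => p.1 + p.2 • v) (𝓝 (x, (0:ℝ))) (𝓝 x) := by
      simpa using hc.tendsto (x, (0:ℝ))
    refine h1.mono_left ?_
    rw [nhds_prod_eq]
    exact Filter.prod_mono le_rfl nhdsWithin_le_nhds
  haveI : (Filter.map φ (cL x)).NeBot := Filter.NeBot.map inferInstance φ
  have hkey : ∀ p : E × ℝ, cq F (v + w) p = cq F w (φ p) + cq F v p := by
    intro p
    simp only [cq, hφdef, smul_add, ← add_assoc]
    rw [eq_comm, ← add_div, sub_add_sub_cancel]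
  have hbw : ∀ᶠ p in cL x, |cq F w (φ p)| ≤ K * ‖w‖ := hφ.eventually (hev w)
  have step1 : limsup (fun p => cq F w (φ p)) (cL x) ≤ clarkeDeriv F x w := by
    rw [clarkeDeriv_eq]
    have e1 : limsup (fun p => cq F w (φ p)) (cL x)
        = limsup (cq F w) (Filter.map φ (cL x)) := (limsup_map_eq (cq F w) φ (cL x)).symm
    rw [e1]
    refine Filter.limsup_le_limsup_of_le hφ ?_ (bdd_le_of_ev (hev w))
    exact Filter.isCoboundedUnder_le_of_eventually_le _
      (Filter.eventually_map.2 (hbw.mono fun p h => (abs_le.1 h).1))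
  calc clarkeDeriv F x (v + w)
      = limsup ((fun p => cq F w (φ p)) + cq F v) (cL x) := by
        rw [clarkeDeriv_eq]; congr 1; funext p
        simpa [Pi.add_apply] using hkey p
    _ ≤ limsup (fun p => cq F w (φ p)) (cL x) + limsup (cq F v) (cL x) :=
        limsup_add_le (bdd_ge_of_ev hbw) (bdd_le_of_ev hbw)
          (cobdd_le_of_ev (hev v)) (bdd_le_of_ev (hev v))
    _ ≤ clarkeDeriv F x w + clarkeDeriv F x v := by
        exact add_le_add step1 (le_of_eq (clarkeDeriv_eq F x v).symm)
    _ = clarkeDeriv F x v + clarkeDeriv F x w := add_comm _ _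

lemma clarkeDeriv_smul (F : E → ℝ) (hF : LocallyLipschitz F) (x : E) {c : ℝ} (hc : 0 < c)
    (v : E) : clarkeDeriv F x (c • v) = c * clarkeDeriv F x v := by
  obtain ⟨K, hK0, hev⟩ := exists_clarke_bounds F hF x
  set ψ : E × ℝ → E × ℝ := fun p => (p.1, c * p.2) with hψdef
  have key : ∀ d : ℝ, 0 < d →
      Filter.Tendsto (fun μ : ℝ => d * μ) (𝓝[>] (0:ℝ)) (𝓝[>] (0:ℝ)) := by
    intro d hd
    rw [tendsto_nhdsWithin_iff]
    constructor
    · have hcont : Continuous fun μ : ℝ => d * μ := continuous_const.mul continuous_id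
      have := hcont.tendsto (0:ℝ)
      simpa using (this.mono_left nhdsWithin_le_nhds)
    · filter_upwards [self_mem_nhdsWithin] with μ hμ
      exact mul_pos hd hμ
  have hmul : Filter.map (fun μ : ℝ => c * μ) (𝓝[>] (0:ℝ)) = 𝓝[>] (0:ℝ) := by
    refine le_antisymm (key c hc) ?_
    have h2 := Filter.map_mono (m := fun μ : ℝ => c * μ) (key c⁻¹ (inv_pos.2 hc))
    rw [Filter.map_map] at h2
    have hid : ((fun μ : ℝ => c * μ) ∘ fun μ : ℝ => c⁻¹ * μ) = id := by
      funext μ; simp [← mul_assoc, mul_inv_cancel₀ hc.ne']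
    rwa [hid, Filter.map_id] at h2
  have hmap : Filter.map ψ (cL x) = cL x := by
    unfold cL
    have h := Filter.prod_map_map_eq (m₁ := (id : E → E)) (m₂ := fun μ : ℝ => c * μ)
      (f₁ := 𝓝 x) (f₂ := 𝓝[>] (0:ℝ))
    rw [Filter.map_id, hmul] at h
    exact h.symm
  have hkey : ∀ p : E × ℝ, cq F (c • v) p = c * cq F v (ψ p) := by
    intro p
    simp only [cq, hψdef, smul_smul, mul_comm p.2 c]
    rw [mul_div_assoc', mul_div_mul_left _ _ hc.ne']
  have hu := bdd_le_of_ev (hev v)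
  have hu_co := cobdd_le_of_ev (hev v)
  have hgu : (cL x).IsBoundedUnder (· ≤ ·) (fun p => c * cq F v p) :=
    Filter.isBoundedUnder_of_eventually_le ((hev v).mono fun p h =>
      mul_le_mul_of_nonneg_left (abs_le.1 h).2 hc.le)
  have hgu_co : (cL x).IsCoboundedUnder (· ≤ ·) (fun p => c * cq F v p) :=
    Filter.isCoboundedUnder_le_of_eventually_le _ ((hev v).mono fun p h =>
      mul_le_mul_of_nonneg_left (abs_le.1 h).1 hc.le)
  calc clarkeDeriv F x (c • v)
      = limsup (fun p => c * cq F v (ψ p)) (cL x) := by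
        rw [clarkeDeriv_eq]; congr 1; funext p; exact hkey p
    _ = limsup (fun p => c * cq F v p) (Filter.map ψ (cL x)) :=
        (limsup_map_eq (fun p => c * cq F v p) ψ (cL x)).symm
    _ = limsup (fun p => c * cq F v p) (cL x) := by rw [hmap]
    _ = c * clarkeDeriv F x v := by
        rw [clarkeDeriv_eq]
        exact ((OrderIso.mulLeft₀ c hc).limsup_apply hu hu_co hgu hgu_co).symm
end aux2

lemma clarkeGrad_nonempty {E : Type*} [NormedAddCommGroup E] [NormedSpace ℝ E]
    (F : E → ℝ) (hF : LocallyLipschitz F) (x : E) : (clarkeGrad F x).Nonempty := by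
  obtain ⟨K, hK0, hev⟩ := exists_clarke_bounds F hF x
  have hub : ∀ v : E, clarkeDeriv F x v ≤ K * ‖v‖ := fun v => clarkeDeriv_le_of_ev (hev v)
  have hf0 : ∀ p : ((⊥ : Submodule ℝ E) →ₗ[ℝ] ℝ), True := fun _ => trivial
  obtain ⟨g, -, hg⟩ := exists_extension_of_le_sublinear (⟨⊥, 0⟩ : E →ₗ.[ℝ] ℝ)
    (clarkeDeriv F x)
    (fun c hc v => clarkeDeriv_smul F hF x hc v)
    (fun v w => clarkeDeriv_add_le F hF x v w)
    (by
      rintro ⟨v, hv⟩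
      have hv0 : v = 0 := by simpa using hv
      simp [hv0, clarkeDeriv_zero F x])
  have hbound : ∀ v : E, ‖g v‖ ≤ K * ‖v‖ := by
    intro v
    rw [Real.norm_eq_abs, abs_le]
    constructor
    · have h1 : g (-v) ≤ clarkeDeriv F x (-v) := hg (-v)
      have h2 : clarkeDeriv F x (-v) ≤ K * ‖v‖ := by simpa using hub (-v)
      have : g (-v) = -g v := by simp
      linarith [this ▸ h1]
    · exact (hg v).trans (hub v)
  refine ⟨LinearMap.mkContinuous g K hbound, fun v => ?_⟩
  exact hg v


set_option maxHeartbeats 1000000 in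
/-- Pointwise estimate between the solutions of the hemivariational
inclusion with data `(J, z)` and of the perturbed inclusion with data `(J_δ, z_δ)`. -/
theorem statement_9
    {Z₁ Z₂ Y : Type*}
    [NormedAddCommGroup Z₁] [NormedSpace ℝ Z₁] [CompleteSpace Z₁]
    [TopologicalSpace.SeparableSpace Z₁]
    [NormedAddCommGroup Z₂] [NormedSpace ℝ Z₂] [CompleteSpace Z₂]
    [TopologicalSpace.SeparableSpace Z₂]
    [NormedAddCommGroup Y] [NormedSpace ℝ Y] [CompleteSpace Y]
    [TopologicalSpace.SeparableSpace Y]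
    (hreflZ₁ : Function.Surjective ⇑(NormedSpace.inclusionInDoubleDual ℝ Z₁))
    (hreflZ₂ : Function.Surjective ⇑(NormedSpace.inclusionInDoubleDual ℝ Z₂))
    (hreflY : Function.Surjective ⇑(NormedSpace.inclusionInDoubleDual ℝ Y))
    (T : ℝ) (hT : 0 < T) (m : ℕ) (τ : ℕ → ℝ)
    (hτ0 : τ 0 = 0) (hτT : τ (m+1) = T) (hτmono : ∀ j ≤ m, τ j < τ (j+1))
    -- (HA)
    (A : ℝ → Z₂ → StrongDual ℝ Z₂)
    (hAt : ∀ y : Z₂, ContinuousOn (fun t => A t y) (Set.Icc 0 T))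
    (hAbdd : ∀ t ∈ Set.Icc (0:ℝ) T, ∀ s : Set Z₂,
      Bornology.IsBounded s → Bornology.IsBounded (A t '' s))
    (hAdemi : ∀ t ∈ Set.Icc (0:ℝ) T, ∀ (zn : ℕ → Z₂) (z : Z₂),
      Filter.Tendsto zn Filter.atTop (nhds z) →
      ∀ v : Z₂, Filter.Tendsto (fun n => A t (zn n) v) Filter.atTop (nhds (A t z v)))
    (mA : ℝ) (hmA : 0 < mA)
    (hAsm : ∀ t ∈ Set.Icc (0:ℝ) T, ∀ y₁ y₂ : Z₂,
      mA * ‖y₁ - y₂‖ ^ 2 ≤ (A t y₁ - A t y₂) (y₁ - y₂))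
    -- (Hg)
    (g : ℝ → Z₁ → StrongDual ℝ Z₂)
    (hgt : ∀ z : Z₁, ContinuousOn (fun t => g t z) (Set.Icc 0 T))
    (mg : ℝ) (hmg : 0 < mg)
    (hglip : ∀ t ∈ Set.Icc (0:ℝ) T, ∀ z₁ z₂ : Z₁, ‖g t z₁ - g t z₂‖ ≤ mg * ‖z₁ - z₂‖)
    -- N
    (N : Z₂ →L[ℝ] Y) (hNcompact : IsCompactOperator (⇑N)) (hNsurj : Function.Surjective ⇑N)
    -- J and its relaxed monotonicity
    (J : ℝ → Y → ℝ)
    (hJlip : ∀ t ∈ Set.Icc (0:ℝ) T, LocallyLipschitz (J t))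
    (cJ : ℝ) (hcJ : 0 < cJ)
    (hJrel : ∀ t ∈ Set.Icc (0:ℝ) T, ∀ w₁ w₂ : Y,
      ∀ θ₁ ∈ clarkeGrad (J t) w₁, ∀ θ₂ ∈ clarkeGrad (J t) w₂,
      -(cJ * ‖w₁ - w₂‖ ^ 2) ≤ (θ₁ - θ₂) (w₁ - w₂))
    (hO : cJ * ‖N‖ ^ 2 < mA)
    -- the perturbed functional
    (Jδ : ℝ → Y → ℝ)
    (hJδlip : ∀ t ∈ Set.Icc (0:ℝ) T, LocallyLipschitz (Jδ t))
    -- the perturbation bound `V(δ)`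
    (Vδ : ℝ) (hVδ : 0 ≤ Vδ)
    (hV : ∀ t ∈ Set.Icc (0:ℝ) T, ∀ w : Z₂,
      ∀ ζ ∈ (fun η : StrongDual ℝ Y => η.comp N) '' clarkeGrad (J t) (N w),
      ∀ ζδ ∈ (fun η : StrongDual ℝ Y => η.comp N) '' clarkeGrad (Jδ t) (N w),
        ‖ζ - ζδ‖ ≤ Vδ)
    -- the two solutions
    (z zδ : ℝ → Z₁) (hz : IC T m τ z) (hzδ : IC T m τ zδ)
    (y yδ : ℝ → Z₂) (hy : IC T m τ y) (hyδ : IC T m τ yδ)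
    (hincl : ∀ t ∈ Set.Icc (0:ℝ) T,
      g t (z t) - A t (y t) ∈
        (fun η : StrongDual ℝ Y => η.comp N) '' clarkeGrad (J t) (N (y t)))
    (hinclδ : ∀ t ∈ Set.Icc (0:ℝ) T,
      g t (zδ t) - A t (yδ t) ∈
        (fun η : StrongDual ℝ Y => η.comp N) '' clarkeGrad (Jδ t) (N (yδ t))) :
    ∀ t ∈ Set.Icc (0:ℝ) T,
      ‖y t - yδ t‖ ≤ Vδ / (mA - cJ * ‖N‖ ^ 2)
        + (mg / (mA - cJ * ‖N‖ ^ 2)) * ‖z t - zδ t‖ := by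
  intro t ht
  obtain ⟨η, hη, hηeq⟩ := hincl t ht
  obtain ⟨ηδ, hηδ, hηδeq⟩ := hinclδ t ht
  obtain ⟨θ, hθ⟩ := clarkeGrad_nonempty (J t) (hJlip t ht) (N (yδ t))
  set u := y t - yδ t with hu
  set d := mA - cJ * ‖N‖ ^ 2 with hd
  have hdpos : 0 < d := by rw [hd]; linarith
  have hηeq' : η.comp N = g t (z t) - A t (y t) := hηeq
  have hηδeq' : ηδ.comp N = g t (zδ t) - A t (yδ t) := hηδeq
  have hA1 : A t (y t) = g t (z t) - η.comp N := by rw [hηeq']; abel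
  have hA2 : A t (yδ t) = g t (zδ t) - ηδ.comp N := by rw [hηδeq']; abel
  have hmono : mA * ‖u‖ ^ 2 ≤ (A t (y t) - A t (yδ t)) u := hAsm t ht (y t) (yδ t)
  have hgb : (g t (z t) - g t (zδ t)) u ≤ mg * ‖z t - zδ t‖ * ‖u‖ := by
    calc (g t (z t) - g t (zδ t)) u ≤ ‖(g t (z t) - g t (zδ t)) u‖ := by
          rw [Real.norm_eq_abs]; exact le_abs_self _
      _ ≤ ‖g t (z t) - g t (zδ t)‖ * ‖u‖ := (g t (z t) - g t (zδ t)).le_opNorm u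
      _ ≤ mg * ‖z t - zδ t‖ * ‖u‖ :=
          mul_le_mul_of_nonneg_right (hglip t ht (z t) (zδ t)) (norm_nonneg u)
  have hrel := hJrel t ht (N (y t)) (N (yδ t)) η hη θ hθ
  have hNu : ‖N (y t) - N (yδ t)‖ ≤ ‖N‖ * ‖u‖ := by
    rw [← map_sub]; exact N.le_opNorm u
  have hrel' : -(cJ * ‖N‖ ^ 2 * ‖u‖ ^ 2) ≤ (η - θ) (N (y t) - N (yδ t)) := by
    refine le_trans ?_ hrel
    have h2 : ‖N (y t) - N (yδ t)‖ ^ 2 ≤ (‖N‖ * ‖u‖) ^ 2 :=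
      pow_le_pow_left₀ (norm_nonneg _) hNu 2
    nlinarith
  have hVb : ‖θ.comp N - ηδ.comp N‖ ≤ Vδ :=
    hV t ht (yδ t) (θ.comp N) ⟨θ, hθ, rfl⟩ (ηδ.comp N) ⟨ηδ, hηδ, rfl⟩
  have hθb : -(Vδ * ‖u‖) ≤ (θ.comp N - ηδ.comp N) u := by
    calc -(Vδ * ‖u‖) ≤ -(‖θ.comp N - ηδ.comp N‖ * ‖u‖) :=
          neg_le_neg (mul_le_mul_of_nonneg_right hVb (norm_nonneg u))
      _ ≤ -‖(θ.comp N - ηδ.comp N) u‖ :=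
          neg_le_neg ((θ.comp N - ηδ.comp N).le_opNorm u)
      _ ≤ (θ.comp N - ηδ.comp N) u := by rw [Real.norm_eq_abs]; exact neg_abs_le _
  have hdecomp : (A t (y t) - A t (yδ t)) u
      = (g t (z t) - g t (zδ t)) u - (η - θ) (N (y t) - N (yδ t))
        - (θ.comp N - ηδ.comp N) u := by
    simp only [hA1, hA2, hu, ContinuousLinearMap.sub_apply, ContinuousLinearMap.comp_apply,
      map_sub]
    ring
  have hkey : d * ‖u‖ ^ 2 ≤ (mg * ‖z t - zδ t‖ + Vδ) * ‖u‖ := by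
    rw [hd]; nlinarith
  by_cases h0 : ‖u‖ = 0
  · have hr : 0 ≤ Vδ / d + mg / d * ‖z t - zδ t‖ := by positivity
    rw [h0]
    exact hr
  · have hupos : 0 < ‖u‖ := lt_of_le_of_ne (norm_nonneg u) (Ne.symm h0)
    have h' : (d * ‖u‖) * ‖u‖ ≤ (mg * ‖z t - zδ t‖ + Vδ) * ‖u‖ := by
      calc (d * ‖u‖) * ‖u‖ = d * ‖u‖ ^ 2 := by ring
        _ ≤ (mg * ‖z t - zδ t‖ + Vδ) * ‖u‖ := hkey
    have hlin : d * ‖u‖ ≤ mg * ‖z t - zδ t‖ + Vδ := le_of_mul_le_mul_right h' hupos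
    have heq : Vδ / d + mg / d * ‖z t - zδ t‖ = (Vδ + mg * ‖z t - zδ t‖) / d := by
      ring
    rw [heq, le_div_iff₀ hdpos]
    have hc := mul_comm ‖u‖ d
    linarith
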